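/- Let C ∈ ℝ^{N×N} be entrywise nonnegative and irreducible, let σ ≥ ρ(C) (the spectral radius of C), and set A := σI − C (an irreducible M-matrix). Then: (i) for every z ∈ ℝ^N with z ≥ 0 and z ≠ 0, the matrix diag(z) + A is invertible and its inverse is entrywise nonnegative; (ii) for all indices i, j, the entry [(diag(z) + A)^{-1}]_{ij} is a convex and nonincreasing function of z on {z ∈ ℝ^N : z ≥ 0, z ≠ 0}: for all such z, z′ and θ ∈ [0,1], [(diag(θz + (1−θ)z′) + A)^{-1}]_{ij} ≤ θ[(diag(z) + A)^{-1}]_{ij} + (1−θ)[(diag(z′) + A)^{-1}]_{ij}, and z ≤ z′ implies [(diag(z′) + A)^{-1}]_{ij} ≤ [(diag(z) + A)^{-1}]_{ij}. -/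

import Mathlib

noncomputable section

open Matrix

/-- Irreducibility of a nonnegative matrix. -/
def MatIrred {N : ℕ} (C : Matrix (Fin N) (Fin N) ℝ) : Prop :=
  ∀ i j, ∃ k : ℕ, 1 ≤ k ∧ 0 < (C ^ k) i j

/-- Spectral radius of a real matrix: the maximum modulus of its complex eigenvalues. -/
def specRad {N : ℕ} (A : Matrix (Fin N) (Fin N) ℝ) : ℝ :=
  sSup ((fun μ : ℂ => ‖μ‖) '' spectrum ℂ (A.map Complex.ofReal))

namespace Statement5Aux

variable {N : ℕ}

lemma matmul_nonneg {P Q : Matrix (Fin N) (Fin N) ℝ} (hP : ∀ i j, 0 ≤ P i j)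
    (hQ : ∀ i j, 0 ≤ Q i j) : ∀ i j, 0 ≤ (P * Q) i j := by
  intro i j
  rw [Matrix.mul_apply]
  exact Finset.sum_nonneg fun k _ => mul_nonneg (hP i k) (hQ k j)

lemma matpow_nonneg {P : Matrix (Fin N) (Fin N) ℝ} (hP : ∀ i j, 0 ≤ P i j) :
    ∀ n, ∀ i j, 0 ≤ (P ^ n) i j := by
  intro n
  induction n with
  | zero =>
      intro i j
      rw [pow_zero, Matrix.one_apply]
      split <;> norm_num
  | succ n ih =>
      rw [pow_succ]
      exact matmul_nonneg ih hP

lemma mulVec_apply' (P : Matrix (Fin N) (Fin N) ℝ) (x : Fin N → ℝ) (k : Fin N) :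
    (P *ᵥ x) k = ∑ j, P k j * x j := by
  simp [Matrix.mulVec, dotProduct]

lemma mulVec_nonneg {P : Matrix (Fin N) (Fin N) ℝ} {x : Fin N → ℝ}
    (hP : ∀ i j, 0 ≤ P i j) (hx : ∀ k, 0 ≤ x k) : ∀ k, 0 ≤ (P *ᵥ x) k := by
  intro k
  rw [mulVec_apply']
  exact Finset.sum_nonneg fun j _ => mul_nonneg (hP k j) (hx j)

lemma mulVec_mono {P : Matrix (Fin N) (Fin N) ℝ} {x y : Fin N → ℝ}
    (hP : ∀ i j, 0 ≤ P i j) (hxy : ∀ k, x k ≤ y k) : ∀ k, (P *ᵥ x) k ≤ (P *ᵥ y) k := by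
  intro k
  rw [mulVec_apply', mulVec_apply']
  exact Finset.sum_le_sum fun j _ => mul_le_mul_of_nonneg_left (hxy j) (hP k j)

lemma matpow_le {P Q : Matrix (Fin N) (Fin N) ℝ} (hP : ∀ i j, 0 ≤ P i j)
    (hPQ : ∀ i j, P i j ≤ Q i j) : ∀ n i j, (P ^ n) i j ≤ (Q ^ n) i j := by
  intro n
  induction n with
  | zero => intro i j; rw [pow_zero, pow_zero]
  | succ n ih =>
      intro i j
      rw [pow_succ, pow_succ, Matrix.mul_apply, Matrix.mul_apply]
      refine Finset.sum_le_sum fun k _ => ?_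
      exact mul_le_mul (ih i k) (hPQ k j) (hP k j) (le_trans (matpow_nonneg hP n i k) (ih i k))

lemma pow_add_entry {P : Matrix (Fin N) (Fin N) ℝ} (hP : ∀ i j, 0 ≤ P i j)
    (a b : ℕ) (i k j : Fin N) : (P ^ a) i k * (P ^ b) k j ≤ (P ^ (a + b)) i j := by
  rw [pow_add, Matrix.mul_apply]
  exact Finset.single_le_sum
    (fun m _ => mul_nonneg (matpow_nonneg hP a i m) (matpow_nonneg hP b m j))
    (Finset.mem_univ k)

lemma walk_to_pow {P : Matrix (Fin N) (Fin N) ℝ} (hP : ∀ i j, 0 ≤ P i j) (g : ℕ → Fin N) :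
    ∀ k, (∀ t, t < k → 0 < P (g t) (g (t + 1))) → 0 < (P ^ k) (g 0) (g k) := by
  intro k
  induction k with
  | zero => intro _; rw [pow_zero, Matrix.one_apply_eq]; norm_num
  | succ k ih =>
      intro hg
      have h1 : 0 < (P ^ k) (g 0) (g k) := ih fun t ht => hg t (lt_trans ht (Nat.lt_succ_self k))
      have h2 : 0 < (P ^ k) (g 0) (g k) * P (g k) (g (k + 1)) :=
        mul_pos h1 (hg k (Nat.lt_succ_self k))
      have h3 := pow_add_entry hP k 1 (g 0) (g k) (g (k + 1))
      rw [pow_one] at h3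
      exact lt_of_lt_of_le h2 h3

lemma pow_to_walk {P : Matrix (Fin N) (Fin N) ℝ} (hP : ∀ i j, 0 ≤ P i j) :
    ∀ k i j, 0 < (P ^ k) i j →
      ∃ g : ℕ → Fin N, g 0 = i ∧ g k = j ∧ ∀ t, t < k → 0 < P (g t) (g (t + 1)) := by
  intro k
  induction k with
  | zero =>
      intro i j h
      rw [pow_zero, Matrix.one_apply] at h
      by_cases hij : i = j
      · exact ⟨fun _ => i, rfl, hij, fun t ht => absurd ht (Nat.not_lt_zero t)⟩
      · rw [if_neg hij] at h; exact absurd h (lt_irrefl 0)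
  | succ k ih =>
      intro i j h
      rw [pow_succ, Matrix.mul_apply] at h
      have hex : ∃ m, 0 < (P ^ k) i m * P m j := by
        by_contra hc
        push_neg at hc
        have : (∑ m, (P ^ k) i m * P m j) ≤ 0 := Finset.sum_nonpos fun m _ => hc m
        linarith
      obtain ⟨m, hm⟩ := hex
      have h1 : 0 < (P ^ k) i m := by
        rcases (matpow_nonneg hP k i m).lt_or_eq with h1 | h1
        · exact h1
        · rw [← h1, zero_mul] at hm; exact absurd hm (lt_irrefl 0)
      have h2 : 0 < P m j := by
        rcases (hP m j).lt_or_eq with h2 | h2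
        · exact h2
        · rw [← h2, mul_zero] at hm; exact absurd hm (lt_irrefl 0)
      obtain ⟨g, hg0, hgk, hgw⟩ := ih i m h1
      refine ⟨fun t => if t = k + 1 then j else g t, by simp [hg0], by simp, ?_⟩
      intro t ht
      show 0 < P (if t = k + 1 then j else g t) (if t + 1 = k + 1 then j else g (t + 1))
      by_cases htk : t = k
      · subst htk
        rw [if_neg (by omega : ¬ t = t + 1), if_pos rfl, hgk]
        exact h2
      · have ht' : t < k := by omega
        rw [if_neg (by omega : ¬ t = k + 1), if_neg (by omega : ¬ t + 1 = k + 1)]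
        exact hgw t ht'

lemma loopless_walk {P : Matrix (Fin N) (Fin N) ℝ} (_hP : ∀ i j, 0 ≤ P i j) :
    ∀ k (g : ℕ → Fin N), (∀ t, t < k → 0 < P (g t) (g (t + 1))) → g 0 ≠ g k →
    ∃ m : ℕ, ∃ h : ℕ → Fin N, 1 ≤ m ∧ h 0 = g 0 ∧ h m = g k ∧
      ∀ t, t < m → h t ≠ h (t + 1) ∧ 0 < P (h t) (h (t + 1)) := by
  intro k
  induction k using Nat.strong_induction_on with
  | _ k ih =>
  intro g hg hne
  by_cases hloop : ∃ t, t < k ∧ g t = g (t + 1)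
  · obtain ⟨t₀, ht₀, heq⟩ := hloop
    set g' : ℕ → Fin N := fun t => if t ≤ t₀ then g t else g (t + 1) with hg'
    have h0 : g' 0 = g 0 := by simp [hg']
    have hend : g' (k - 1) = g k := by
      by_cases hc : k - 1 ≤ t₀
      · have h1 : t₀ = k - 1 := by omega
        have h2 : t₀ + 1 = k := by omega
        have h3 : g' (k - 1) = g (k - 1) := if_pos hc
        rw [h3, ← h1, heq, h2]
      · have h3 : g' (k - 1) = g (k - 1 + 1) := if_neg hc
        rw [h3]
        congr 1
        omega
    have hw : ∀ t, t < k - 1 → 0 < P (g' t) (g' (t + 1)) := by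
      intro t ht
      by_cases h1 : t + 1 ≤ t₀
      · have e1 : g' t = g t := if_pos (by omega)
        have e2 : g' (t + 1) = g (t + 1) := if_pos h1
        rw [e1, e2]
        exact hg t (by omega)
      · by_cases h2 : t ≤ t₀
        · have ht0 : t = t₀ := by omega
          have e1 : g' t = g t := if_pos h2
          have e2 : g' (t + 1) = g (t + 2) := if_neg (by omega)
          rw [e1, e2, ht0, heq]
          exact hg (t₀ + 1) (by omega)
        · have e1 : g' t = g (t + 1) := if_neg h2
          have e2 : g' (t + 1) = g (t + 2) := if_neg (by omega)
          rw [e1, e2]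
          exact hg (t + 1) (by omega)
    have hne' : g' 0 ≠ g' (k - 1) := by rw [h0, hend]; exact hne
    obtain ⟨m, h, hm1, hh0, hhm, hhw⟩ := ih (k - 1) (by omega) g' hw hne'
    exact ⟨m, h, hm1, by rw [hh0, h0], by rw [hhm, hend], hhw⟩
  · push_neg at hloop
    have hk : 1 ≤ k := by
      rcases Nat.eq_zero_or_pos k with h | h
      · subst h; exact absurd rfl hne
      · exact h
    exact ⟨k, g, hk, rfl, rfl, fun t ht => ⟨hloop t ht, hg t ht⟩⟩

/-- The off-diagonal part of a matrix. -/
def offDiag (C : Matrix (Fin N) (Fin N) ℝ) : Matrix (Fin N) (Fin N) ℝ :=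
  Matrix.of fun a b => if a = b then (0 : ℝ) else C a b

lemma offDiag_apply (C : Matrix (Fin N) (Fin N) ℝ) (a b : Fin N) :
    offDiag C a b = if a = b then (0 : ℝ) else C a b := rfl

lemma offDiag_nonneg {C : Matrix (Fin N) (Fin N) ℝ} (hC : ∀ i j, 0 ≤ C i j) :
    ∀ i j, 0 ≤ offDiag C i j := by
  intro i j
  rw [offDiag_apply]
  split
  · exact le_refl 0
  · exact hC i j

lemma offDiag_irred (hN : 2 ≤ N) {C : Matrix (Fin N) (Fin N) ℝ} (hC : ∀ i j, 0 ≤ C i j)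
    (hirr : MatIrred C) : ∀ i j, ∃ k, 1 ≤ k ∧ 0 < (offDiag C ^ k) i j := by
  have hCoff := offDiag_nonneg hC
  have key : ∀ i j : Fin N, i ≠ j → ∃ k, 1 ≤ k ∧ 0 < (offDiag C ^ k) i j := by
    intro i j hij
    obtain ⟨k, _hk1, hkpos⟩ := hirr i j
    obtain ⟨g, hg0, hgk, hgw⟩ := pow_to_walk hC k i j hkpos
    have hne : g 0 ≠ g k := by rw [hg0, hgk]; exact hij
    obtain ⟨m, h, hm1, hh0, hhm, hhw⟩ := loopless_walk hC k g hgw hne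
    have hwalk : ∀ t, t < m → 0 < offDiag C (h t) (h (t + 1)) := by
      intro t ht
      obtain ⟨hne2, hpos⟩ := hhw t ht
      rw [offDiag_apply, if_neg hne2]
      exact hpos
    have := walk_to_pow hCoff h m hwalk
    rw [hh0, hhm, hg0, hgk] at this
    exact ⟨m, hm1, this⟩
  intro i j
  by_cases hij : i = j
  · subst hij
    have : Nontrivial (Fin N) := Fin.nontrivial_iff_two_le.mpr hN
    obtain ⟨j', hj'⟩ := exists_ne i
    obtain ⟨k₁, hk₁, hp₁⟩ := key i j' (Ne.symm hj')
    obtain ⟨k₂, hk₂, hp₂⟩ := key j' i hj'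
    refine ⟨k₁ + k₂, by omega, ?_⟩
    exact lt_of_lt_of_le (mul_pos hp₁ hp₂) (pow_add_entry hCoff k₁ k₂ i j' i)
  · exact key i j hij

lemma summable_geom_div {γ : ℝ} (h0 : 0 ≤ γ) (h1 : γ < 1) (T : ℕ) (hT : 1 ≤ T) :
    Summable (fun n : ℕ => γ ^ (n / T)) := by
  have hkey : ∀ m, ∑ n ∈ Finset.range (T * m), γ ^ (n / T) = (∑ q ∈ Finset.range m, γ ^ q) * T := by
    intro m
    induction m with
    | zero => simp
    | succ m ihm =>
        have hsum : ∑ n ∈ Finset.Ico (T * m) (T * (m + 1)), γ ^ (n / T) = γ ^ m * T := by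
          have hconst : ∀ n ∈ Finset.Ico (T * m) (T * (m + 1)), γ ^ (n / T) = γ ^ m := by
            intro n hn
            rw [Finset.mem_Ico] at hn
            congr 1
            exact Nat.div_eq_of_lt_le (by rw [mul_comm]; exact hn.1)
              (by rw [mul_comm]; exact hn.2)
          rw [Finset.sum_congr rfl hconst, Finset.sum_const, Nat.card_Ico]
          have hTm : T * (m + 1) - T * m = T := by rw [Nat.mul_succ]; omega
          rw [hTm, nsmul_eq_mul, mul_comm]
        have hsplit : ∑ n ∈ Finset.range (T * m), γ ^ (n / T)
              + ∑ n ∈ Finset.Ico (T * m) (T * (m + 1)), γ ^ (n / T)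
            = ∑ n ∈ Finset.range (T * (m + 1)), γ ^ (n / T) := by
          simp only [Finset.range_eq_Ico]
          exact Finset.sum_Ico_consecutive _ (Nat.zero_le _)
            (Nat.mul_le_mul_left T (Nat.le_succ m))
        rw [← hsplit, ihm, hsum, Finset.sum_range_succ]
        ring
  apply summable_of_sum_range_le (c := (1 - γ)⁻¹ * T)
  · intro n; positivity
  · intro m
    have hsub : ∑ n ∈ Finset.range m, γ ^ (n / T) ≤ ∑ n ∈ Finset.range (T * m), γ ^ (n / T) := by
      apply Finset.sum_le_sum_of_subset_of_nonneg
      · apply Finset.range_subset_range.mpr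
        calc m = 1 * m := (one_mul m).symm
        _ ≤ T * m := Nat.mul_le_mul_right m hT
      · intro n _ _; positivity
    rw [hkey m] at hsub
    refine le_trans hsub ?_
    have hgeo : ∑ q ∈ Finset.range m, γ ^ q ≤ (1 - γ)⁻¹ := by
      rw [geom_sum_eq (ne_of_lt h1)]
      have hne1 : γ - 1 ≠ 0 := fun hc => absurd (show γ = 1 by linarith) (ne_of_lt h1)
      have hne2 : 1 - γ ≠ 0 := fun hc => absurd (show γ = 1 by linarith) (ne_of_lt h1)
      rw [show (γ ^ m - 1) / (γ - 1) = (1 - γ ^ m) / (1 - γ) by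
        rw [div_eq_div_iff hne1 hne2]; ring]
      rw [inv_eq_one_div]
      gcongr
      · nlinarith [pow_nonneg h0 m]
    have hTnn : (0 : ℝ) ≤ T := Nat.cast_nonneg T
    exact mul_le_mul_of_nonneg_right hgeo hTnn

lemma summable_pow_entries {G : Matrix (Fin N) (Fin N) ℝ}
    (hG : ∀ i j, 0 ≤ G i j) (hirr : ∀ i j, ∃ k, 1 ≤ k ∧ 0 < (G ^ k) i j)
    {w : Fin N → ℝ} (hw : ∀ k, 0 < w k) (hsub : ∀ k, (G *ᵥ w) k ≤ w k)
    (k₀ : Fin N) (hstrict : (G *ᵥ w) k₀ < w k₀) :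
    ∀ i j, Summable fun n => (G ^ n) i j := by
  have hNE : Nonempty (Fin N) := ⟨k₀⟩
  set e : ℕ → Fin N → ℝ := fun n => (G ^ n) *ᵥ w with he
  have he0 : e 0 = w := by simp [he]
  have hsucc : ∀ n k, e (n + 1) k ≤ e n k := by
    intro n k
    have h1 : e (n + 1) = (G ^ n) *ᵥ (G *ᵥ w) := by
      show (G ^ (n + 1)) *ᵥ w = (G ^ n) *ᵥ (G *ᵥ w)
      rw [Matrix.mulVec_mulVec, ← pow_succ]
    rw [h1]
    exact mulVec_mono (matpow_nonneg hG n) hsub k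
  have hanti : ∀ k, Antitone fun n => e n k := fun k =>
    antitone_nat_of_succ_le fun n => hsucc n k
  have hle_w : ∀ n k, e n k ≤ w k := by
    intro n k
    have h := hanti k (Nat.zero_le n)
    change e n k ≤ e 0 k at h
    rwa [he0] at h
  have hnn : ∀ n k, 0 ≤ e n k := fun n k =>
    mulVec_nonneg (matpow_nonneg hG n) (fun l => (hw l).le) k
  have hkstrict : ∀ k, ∃ n, e n k < w k := by
    intro k
    obtain ⟨m, _hm1, hmpos⟩ := hirr k k₀
    refine ⟨m + 1, ?_⟩
    have h1 : e (m + 1) = (G ^ m) *ᵥ (G *ᵥ w) := by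
      show (G ^ (m + 1)) *ᵥ w = (G ^ m) *ᵥ (G *ᵥ w)
      rw [Matrix.mulVec_mulVec, ← pow_succ]
    have h2 : ((G ^ m) *ᵥ (G *ᵥ w)) k < ((G ^ m) *ᵥ w) k := by
      rw [mulVec_apply', mulVec_apply']
      apply Finset.sum_lt_sum
      · intro l _
        exact mul_le_mul_of_nonneg_left (hsub l) (matpow_nonneg hG m k l)
      · exact ⟨k₀, Finset.mem_univ _, mul_lt_mul_of_pos_left hstrict hmpos⟩
    calc e (m + 1) k = ((G ^ m) *ᵥ (G *ᵥ w)) k := by rw [h1]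
      _ < ((G ^ m) *ᵥ w) k := h2
      _ ≤ w k := hle_w m k
  choose nk hnk using hkstrict
  set T : ℕ := Finset.univ.sup nk with hTdef
  have hT : ∀ k, e T k < w k := by
    intro k
    exact lt_of_le_of_lt (hanti k (Finset.le_sup (Finset.mem_univ k))) (hnk k)
  have hT1 : 1 ≤ T := by
    by_contra hc
    have hT0 : T = 0 := by omega
    have := hT k₀
    rw [hT0, he0] at this
    exact lt_irrefl _ this
  set γ : ℝ := Finset.univ.sup' Finset.univ_nonempty (fun k => e T k / w k) with hγdef
  have hγ1 : γ < 1 := by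
    rw [hγdef, Finset.sup'_lt_iff]
    intro k _
    exact (div_lt_one (hw k)).mpr (hT k)
  have hγ0 : 0 ≤ γ :=
    le_trans (div_nonneg (hnn T k₀) (hw k₀).le)
      (Finset.le_sup' (f := fun k => e T k / w k) (Finset.mem_univ k₀))
  have hγw : ∀ k, e T k ≤ γ * w k := by
    intro k
    have h := Finset.le_sup' (f := fun k => e T k / w k) (Finset.mem_univ k)
    calc e T k = e T k / w k * w k := (div_mul_cancel₀ (e T k) (ne_of_gt (hw k))).symm
      _ ≤ γ * w k := mul_le_mul_of_nonneg_right h (hw k).le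
  have hq : ∀ q k, e (T * q) k ≤ γ ^ q * w k := by
    intro q
    induction q with
    | zero => intro k; rw [Nat.mul_zero, he0, pow_zero, one_mul]
    | succ q ihq =>
        intro k
        have h1 : e (T * (q + 1)) = (G ^ (T * q)) *ᵥ e T := by
          show (G ^ (T * (q + 1))) *ᵥ w = (G ^ (T * q)) *ᵥ ((G ^ T) *ᵥ w)
          rw [Matrix.mulVec_mulVec, ← pow_add, Nat.mul_succ]
        have h2 : ((G ^ (T * q)) *ᵥ e T) k ≤ ((G ^ (T * q)) *ᵥ (γ • w)) k :=
          mulVec_mono (matpow_nonneg hG _) (fun l => by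
            simpa [Pi.smul_apply, smul_eq_mul] using hγw l) k
        calc e (T * (q + 1)) k = ((G ^ (T * q)) *ᵥ e T) k := by rw [h1]
          _ ≤ ((G ^ (T * q)) *ᵥ (γ • w)) k := h2
          _ = γ * e (T * q) k := by rw [Matrix.mulVec_smul]; rfl
          _ ≤ γ * (γ ^ q * w k) := mul_le_mul_of_nonneg_left (ihq k) hγ0
          _ = γ ^ (q + 1) * w k := by ring
  have hbound : ∀ n (i j : Fin N), (G ^ n) i j ≤ γ ^ (n / T) * w i / w j := by
    intro n i j
    rw [le_div_iff₀ (hw j)]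
    have h1 : (G ^ n) i j * w j ≤ e n i := by
      show _ ≤ ((G ^ n) *ᵥ w) i
      rw [mulVec_apply']
      exact Finset.single_le_sum
        (fun l _ => mul_nonneg (matpow_nonneg hG n i l) (hw l).le) (Finset.mem_univ j)
    have h2 : e n i ≤ e (T * (n / T)) i := by
      apply hanti
      calc T * (n / T) = n / T * T := mul_comm _ _
        _ ≤ n := Nat.div_mul_le_self n T
    exact le_trans h1 (le_trans h2 (hq (n / T) i))
  intro i j
  apply Summable.of_nonneg_of_le (fun n => matpow_nonneg hG n i j) (fun n => hbound n i j)
  have hs : Summable fun n : ℕ => γ ^ (n / T) := summable_geom_div hγ0 hγ1 T hT1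
  exact (hs.mul_left (w i / w j)).congr fun n => by ring

section Spectral

attribute [local instance] Matrix.linftyOpNormedAddCommGroup Matrix.linftyOpNormedRing
  Matrix.linftyOpNormedAlgebra

variable {N : ℕ}

lemma entry_abs_le_norm (M : Matrix (Fin N) (Fin N) ℂ) (i j : Fin N) :
    ‖M i j‖ ≤ ‖M‖ := by
  have h : ‖M i j‖₊ ≤ ‖M‖₊ := by
    rw [Matrix.linfty_opNNNorm_def]
    exact le_trans (Finset.single_le_sum (f := fun j => ‖M i j‖₊) (fun _ _ => zero_le)
      (Finset.mem_univ j))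
      (Finset.le_sup (f := fun i => ∑ j, ‖M i j‖₊) (Finset.mem_univ i))
  exact_mod_cast h

lemma abs_spectrum_bddAbove (C : Matrix (Fin N) (Fin N) ℝ) :
    BddAbove ((fun μ : ℂ => ‖μ‖) '' spectrum ℂ (C.map Complex.ofReal)) := by
  refine ⟨‖C.map Complex.ofReal‖ * ‖(1 : Matrix (Fin N) (Fin N) ℂ)‖, ?_⟩
  rintro x ⟨μ', hμ', rfl⟩
  have h := spectrum.subset_closedBall_norm_mul (C.map Complex.ofReal) hμ'
  rw [Metric.mem_closedBall, dist_zero_right] at h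
  exact h

lemma specRad_nonneg (hN : 1 ≤ N) (C : Matrix (Fin N) (Fin N) ℝ) : 0 ≤ specRad C := by
  haveI : Inhabited (Fin N) := ⟨⟨0, by omega⟩⟩
  obtain ⟨μ, hμ⟩ := spectrum.nonempty (C.map Complex.ofReal)
  show (0 : ℝ) ≤ sSup ((fun μ : ℂ => ‖μ‖) '' spectrum ℂ (C.map Complex.ofReal))
  exact le_trans (norm_nonneg μ) (le_csSup (abs_spectrum_bddAbove C) ⟨μ, hμ, rfl⟩)

lemma pow_entry_bound (hN : 1 ≤ N) (C : Matrix (Fin N) (Fin N) ℝ) {t : ℝ}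
    (ht : specRad C < t) :
    ∃ t' : ℝ, 0 ≤ t' ∧ t' < t ∧ ∃ n₀ : ℕ, ∀ n, n₀ ≤ n → ∀ i j, |(C ^ n) i j| ≤ t' ^ n := by
  haveI : Inhabited (Fin N) := ⟨⟨0, by omega⟩⟩
  have hr0 : 0 ≤ specRad C := specRad_nonneg hN C
  set r := specRad C with hr
  set t' := (r + t) / 2 with ht'
  have hrt' : r < t' := by rw [ht']; linarith
  have ht'0 : 0 ≤ t' := le_trans hr0 hrt'.le
  have ht't : t' < t := by rw [ht']; linarith
  refine ⟨t', ht'0, ht't, ?_⟩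
  set Cc : Matrix (Fin N) (Fin N) ℂ := Complex.ofRealHom.mapMatrix C with hCc
  have hCceq : Cc = C.map Complex.ofReal := by rw [hCc, RingHom.mapMatrix_apply]; rfl
  have hsr : spectralRadius ℂ Cc ≤ ENNReal.ofReal r := by
    show (⨆ μ ∈ spectrum ℂ Cc, (‖μ‖₊ : ENNReal)) ≤ ENNReal.ofReal r
    refine iSup₂_le fun μ hμ => ?_
    rw [show ((‖μ‖₊ : NNReal) : ENNReal) = ENNReal.ofReal ‖μ‖ by
      rw [← ENNReal.ofReal_coe_nnreal, coe_nnnorm]]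
    apply ENNReal.ofReal_le_ofReal
    refine le_csSup (abs_spectrum_bddAbove C) ⟨μ, ?_, rfl⟩
    rw [← hCceq]; exact hμ
  have hlt : spectralRadius ℂ Cc < ENNReal.ofReal t' := lt_of_le_of_lt hsr (by
    rw [ENNReal.ofReal_lt_ofReal_iff (lt_of_le_of_lt hr0 hrt')]; exact hrt')
  have hev :=
    (spectrum.pow_nnnorm_pow_one_div_tendsto_nhds_spectralRadius Cc).eventually_lt_const hlt
  rw [Filter.eventually_atTop] at hev
  obtain ⟨n₀, hn₀⟩ := hev
  refine ⟨max n₀ 1, fun n hn i j => ?_⟩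
  have hn1 : 1 ≤ n := le_trans (le_max_right _ _) hn
  have hnne : (n : ℝ) ≠ 0 := Nat.cast_ne_zero.mpr (by omega)
  have hx := hn₀ n (le_trans (le_max_left _ _) hn)
  have hxn : (‖Cc ^ n‖₊ : ENNReal) < ENNReal.ofReal (t' ^ n) := by
    have h1 : ((‖Cc ^ n‖₊ : ENNReal) ^ (1 / (n : ℝ))) ^ (n : ℝ)
        < (ENNReal.ofReal t') ^ (n : ℝ) := ENNReal.rpow_lt_rpow hx (by positivity)
    rw [← ENNReal.rpow_mul, one_div_mul_cancel hnne, ENNReal.rpow_one] at h1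
    rw [ENNReal.ofReal_pow ht'0, ← ENNReal.rpow_natCast (ENNReal.ofReal t') n]
    exact h1
  have hnorm : ‖Cc ^ n‖ < t' ^ n := by
    rw [show ((‖Cc ^ n‖₊ : NNReal) : ENNReal) = ENNReal.ofReal ‖Cc ^ n‖ by
      rw [← ENNReal.ofReal_coe_nnreal, coe_nnnorm]] at hxn
    exact (ENNReal.ofReal_lt_ofReal_iff_of_nonneg (norm_nonneg _)).mp hxn
  have hentry : ‖(Cc ^ n) i j‖ ≤ ‖Cc ^ n‖ := entry_abs_le_norm _ i j
  have hmap : (Cc ^ n) i j = ((C ^ n) i j : ℂ) := by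
    rw [hCc, ← map_pow, RingHom.mapMatrix_apply, Matrix.map_apply]
    rfl
  rw [hmap, Complex.norm_real, Real.norm_eq_abs] at hentry
  linarith

end Spectral

lemma pos_of_subinv {C : Matrix (Fin N) (Fin N) ℝ} (hC : ∀ i j, 0 ≤ C i j)
    (hirr : MatIrred C) {s : ℝ} (hs : 0 ≤ s) {w : Fin N → ℝ} (hw : ∀ k, 0 ≤ w k)
    (hwne : ∃ k, 0 < w k) (hsub : ∀ k, (C *ᵥ w) k ≤ s * w k) : ∀ k, 0 < w k := by
  have hpow : ∀ m k, ((C ^ m) *ᵥ w) k ≤ s ^ m * w k := by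
    intro m
    induction m with
    | zero => intro k; rw [pow_zero, pow_zero, Matrix.one_mulVec, one_mul]
    | succ m ihm =>
        intro k
        have h1 : (C ^ (m + 1)) *ᵥ w = C *ᵥ ((C ^ m) *ᵥ w) := by
          rw [Matrix.mulVec_mulVec, ← pow_succ']
        have h2 : (C *ᵥ ((C ^ m) *ᵥ w)) k ≤ (C *ᵥ (s ^ m • w)) k :=
          mulVec_mono hC (fun l => by
            simpa [Pi.smul_apply, smul_eq_mul] using ihm l) k
        have h3 : (C *ᵥ (s ^ m • w)) k = s ^ m * (C *ᵥ w) k := by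
          rw [Matrix.mulVec_smul]; rfl
        calc ((C ^ (m + 1)) *ᵥ w) k = (C *ᵥ ((C ^ m) *ᵥ w)) k := by rw [h1]
          _ ≤ (C *ᵥ (s ^ m • w)) k := h2
          _ = s ^ m * (C *ᵥ w) k := h3
          _ ≤ s ^ m * (s * w k) := mul_le_mul_of_nonneg_left (hsub k) (pow_nonneg hs m)
          _ = s ^ (m + 1) * w k := by ring
  obtain ⟨j, hj⟩ := hwne
  intro k
  obtain ⟨m, _hm1, hmpos⟩ := hirr k j
  have h1 : (C ^ m) k j * w j ≤ ((C ^ m) *ᵥ w) k := by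
    rw [mulVec_apply']
    exact Finset.single_le_sum (fun l _ => mul_nonneg (matpow_nonneg hC m k l) (hw l))
      (Finset.mem_univ j)
  have h2 : 0 < s ^ m * w k := lt_of_lt_of_le (mul_pos hmpos hj) (le_trans h1 (hpow m k))
  rcases (hw k).lt_or_eq with h3 | h3
  · exact h3
  · rw [← h3, mul_zero] at h2; exact absurd h2 (lt_irrefl 0)

lemma exists_subinv (hN : 1 ≤ N) {C : Matrix (Fin N) (Fin N) ℝ} (hC : ∀ i j, 0 ≤ C i j)
    {t : ℝ} (ht : specRad C < t) :
    ∃ w : Fin N → ℝ, (∀ k, 0 < w k) ∧ ∀ k, (C *ᵥ w) k ≤ t * w k := by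
  have hr0 := specRad_nonneg hN C
  have ht0 : 0 < t := lt_of_le_of_lt hr0 ht
  obtain ⟨t', ht'0, ht't, n₀, hn₀⟩ := pow_entry_bound hN C ht
  have hsum : ∀ i j, Summable (fun n => (C ^ n) i j / t ^ (n + 1)) := by
    intro i j
    rw [← summable_nat_add_iff n₀]
    have hg : Summable (fun n : ℕ => (t' ^ n₀ / t ^ (n₀ + 1)) * (t' / t) ^ n) :=
      (summable_geometric_of_lt_one (div_nonneg ht'0 ht0.le)
        ((div_lt_one ht0).mpr ht't)).mul_left _
    refine Summable.of_nonneg_of_le (fun n => ?_) (fun n => ?_) hg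
    · exact div_nonneg (matpow_nonneg hC _ i j) (by positivity)
    · have h1 : (C ^ (n + n₀)) i j ≤ t' ^ (n + n₀) :=
        le_trans (le_abs_self _) (hn₀ (n + n₀) (by omega) i j)
      have h2 : (0:ℝ) < t ^ (n + n₀ + 1) := by positivity
      calc (C ^ (n + n₀)) i j / t ^ (n + n₀ + 1) ≤ t' ^ (n + n₀) / t ^ (n + n₀ + 1) :=
            (div_le_div_iff_of_pos_right h2).mpr h1
        _ = (t' ^ n₀ / t ^ (n₀ + 1)) * (t' / t) ^ n := by
            rw [div_pow, pow_add t', pow_add t]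
            field_simp
            ring
  set S : Matrix (Fin N) (Fin N) ℝ :=
    Matrix.of (fun i j => ∑' n, (C ^ n) i j / t ^ (n + 1)) with hS
  have hSapp : ∀ i j, S i j = ∑' n, (C ^ n) i j / t ^ (n + 1) := fun i j => rfl
  have hSnn : ∀ i j, 0 ≤ S i j := fun i j =>
    tsum_nonneg fun n => div_nonneg (matpow_nonneg hC n i j) (by positivity)
  have hkey : ∀ i j, (C * S) i j = t * S i j - (1 : Matrix (Fin N) (Fin N) ℝ) i j := by
    intro i j
    have h1 : (C * S) i j = ∑ k, C i k * ∑' n, (C ^ n) k j / t ^ (n + 1) := by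
      rw [Matrix.mul_apply]
      rfl
    have h3 : (C * S) i j = ∑' n, ∑ k, C i k * ((C ^ n) k j / t ^ (n + 1)) := by
      rw [h1, Finset.sum_congr rfl (fun k _ => (tsum_mul_left
        (a := C i k) (f := fun n => (C ^ n) k j / t ^ (n + 1))).symm)]
      exact (Summable.tsum_finsetSum (fun k _ => (hsum k j).mul_left (C i k))).symm
    have h4 : ∀ n, (∑ k, C i k * ((C ^ n) k j / t ^ (n + 1)))
        = (C ^ (n + 1)) i j / t ^ (n + 1) := by
      intro n
      rw [pow_succ' C n, Matrix.mul_apply, Finset.sum_div]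
      exact Finset.sum_congr rfl fun k _ => (mul_div_assoc _ _ _).symm
    have h6 : Summable fun n => (C ^ n) i j / t ^ n := by
      refine ((hsum i j).mul_left t).congr fun n => ?_
      rw [pow_succ]
      field_simp
    have h5 : t * S i j = ∑' n, (C ^ n) i j / t ^ n := by
      rw [hSapp, ← tsum_mul_left]
      refine tsum_congr fun n => ?_
      rw [pow_succ]
      field_simp
    have h7 := Summable.tsum_eq_zero_add h6
    rw [h3, tsum_congr h4, h5, h7, pow_zero, pow_zero, div_one]
    ring
  refine ⟨S *ᵥ (fun _ => 1), ?_, ?_⟩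
  · intro k
    have hle : 1 / t ≤ S k k := by
      rw [hSapp]
      have h := Summable.le_tsum (hsum k k) 0
        (fun n _ => div_nonneg (matpow_nonneg hC n k k) (by positivity))
      simpa [pow_zero, Matrix.one_apply_eq, pow_one] using h
    have h8 : (0:ℝ) < S k k * 1 := by
      rw [mul_one]
      exact lt_of_lt_of_le (one_div_pos.mpr ht0) hle
    rw [mulVec_apply']
    exact lt_of_lt_of_le h8 (Finset.single_le_sum
      (fun l _ => mul_nonneg (hSnn k l) zero_le_one) (Finset.mem_univ k))
  · intro k
    have h10 : C * S = t • S - 1 := by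
      ext i j
      rw [hkey i j]
      simp [Matrix.sub_apply, Matrix.smul_apply, smul_eq_mul]
    have h9 : (C *ᵥ (S *ᵥ fun _ => 1)) k = ((t • S - 1) *ᵥ fun _ => 1) k := by
      rw [Matrix.mulVec_mulVec, h10]
    rw [h9, Matrix.sub_mulVec, Matrix.smul_mulVec, Matrix.one_mulVec]
    have : (0:ℝ) ≤ 1 := zero_le_one
    simp only [Pi.sub_apply, Pi.smul_apply, smul_eq_mul]
    linarith

lemma exists_perron (hN : 2 ≤ N) {C : Matrix (Fin N) (Fin N) ℝ} (hC : ∀ i j, 0 ≤ C i j)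
    (hirr : MatIrred C) :
    ∃ w : Fin N → ℝ, (∀ k, 0 < w k) ∧ ∀ k, (C *ᵥ w) k ≤ specRad C * w k := by
  have hN1 : 1 ≤ N := by omega
  have hr0 := specRad_nonneg hN1 C
  have hseq : ∀ m : ℕ, ∃ w : Fin N → ℝ, (∀ k, 0 < w k) ∧
      ∀ k, (C *ᵥ w) k ≤ (specRad C + 1 / (m + 1)) * w k := by
    intro m
    refine exists_subinv hN1 hC ?_
    have : (0:ℝ) < 1 / (m + 1) := by positivity
    linarith
  choose wseq hwpos hwsub using hseq
  have hwnz : ∀ m, wseq m ≠ 0 := by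
    intro m h
    have h1 := hwpos m ⟨0, by omega⟩
    rw [h] at h1
    exact lt_irrefl 0 h1
  have hnormpos : ∀ m, 0 < ‖wseq m‖ := fun m => norm_pos_iff.mpr (hwnz m)
  set u : ℕ → (Fin N → ℝ) := fun m => ‖wseq m‖⁻¹ • wseq m with hu
  have husphere : ∀ m, u m ∈ Metric.sphere (0 : Fin N → ℝ) 1 := by
    intro m
    rw [Metric.mem_sphere, dist_zero_right]
    rw [show u m = ‖wseq m‖⁻¹ • wseq m from rfl, norm_smul, norm_inv, norm_norm]
    exact inv_mul_cancel₀ (ne_of_gt (hnormpos m))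
  obtain ⟨w, hwmem, φ, hφ, hconv⟩ :=
    (isCompact_sphere (0 : Fin N → ℝ) 1).tendsto_subseq husphere
  have hcoord : ∀ k : Fin N, Filter.Tendsto (fun m => u (φ m) k) Filter.atTop (nhds (w k)) :=
    fun k => ((continuous_apply k).tendsto w).comp hconv
  have hupos : ∀ m k, 0 ≤ u m k := by
    intro m k
    show 0 ≤ (‖wseq m‖⁻¹ • wseq m) k
    rw [Pi.smul_apply, smul_eq_mul]
    exact mul_nonneg (inv_nonneg.mpr (hnormpos m).le) (hwpos m k).le
  have hwk0 : ∀ k, 0 ≤ w k := fun k =>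
    ge_of_tendsto (hcoord k) (Filter.Eventually.of_forall fun m => hupos (φ m) k)
  have husub : ∀ m k, (C *ᵥ u m) k ≤ (specRad C + 1 / (m + 1)) * u m k := by
    intro m k
    have h1 : C *ᵥ u m = ‖wseq m‖⁻¹ • (C *ᵥ wseq m) := by
      show C *ᵥ (‖wseq m‖⁻¹ • wseq m) = _
      rw [Matrix.mulVec_smul]
    rw [h1]
    show ‖wseq m‖⁻¹ * (C *ᵥ wseq m) k ≤ _
    have h2 : ‖wseq m‖⁻¹ * (C *ᵥ wseq m) k
        ≤ ‖wseq m‖⁻¹ * ((specRad C + 1 / (m + 1)) * wseq m k) :=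
      mul_le_mul_of_nonneg_left (hwsub m k) (inv_nonneg.mpr (hnormpos m).le)
    refine le_trans h2 (le_of_eq ?_)
    show _ = (specRad C + 1 / (m + 1)) * (‖wseq m‖⁻¹ • wseq m) k
    rw [Pi.smul_apply, smul_eq_mul]
    ring
  have hwsub' : ∀ k, (C *ᵥ w) k ≤ specRad C * w k := by
    intro k
    have hcont : Filter.Tendsto (fun m => (C *ᵥ u (φ m)) k) Filter.atTop (nhds ((C *ᵥ w) k)) := by
      have hc : Continuous fun v : Fin N → ℝ => (C *ᵥ v) k := by
        have he : (fun v : Fin N → ℝ => (C *ᵥ v) k) = fun v => ∑ j, C k j * v j :=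
          funext fun v => mulVec_apply' C v k
        rw [he]
        exact continuous_finset_sum _ fun j _ => continuous_const.mul (continuous_apply j)
      exact (hc.tendsto w).comp hconv
    have hrhs : Filter.Tendsto (fun m => (specRad C + 1 / (φ m + 1)) * u (φ m) k)
        Filter.atTop (nhds (specRad C * w k)) := by
      have h0 : Filter.Tendsto (fun m : ℕ => 1 / ((φ m : ℝ) + 1)) Filter.atTop (nhds 0) :=
        tendsto_one_div_add_atTop_nhds_zero_nat.comp hφ.tendsto_atTop
      have h1 : Filter.Tendsto (fun m : ℕ => specRad C + 1 / ((φ m : ℝ) + 1))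
          Filter.atTop (nhds (specRad C)) := by
        have := Filter.Tendsto.add (tendsto_const_nhds (x := specRad C) (f := Filter.atTop)) h0
        simpa using this
      exact h1.mul (hcoord k)
    exact le_of_tendsto_of_tendsto' hcont hrhs fun m => husub (φ m) k
  have hwne : ∃ k, 0 < w k := by
    have hw1 : w ≠ 0 := by
      intro h
      rw [Metric.mem_sphere, dist_zero_right, h, norm_zero] at hwmem
      exact one_ne_zero hwmem.symm
    obtain ⟨k, hk⟩ := Function.ne_iff.mp hw1
    exact ⟨k, lt_of_le_of_ne (hwk0 k) (Ne.symm (by simpa using hk))⟩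
  exact ⟨w, pos_of_subinv hC hirr hr0 hwk0 hwne hwsub', hwsub'⟩

/-- Log-convexity on the nonnegative orthant. -/
def LC {N : ℕ} (f : (Fin N → ℝ) → ℝ) : Prop :=
  (∀ z : Fin N → ℝ, (∀ k, 0 ≤ z k) → 0 ≤ f z) ∧
  ∀ z z' : Fin N → ℝ, (∀ k, 0 ≤ z k) → (∀ k, 0 ≤ z' k) →
    ∀ θ θ' : ℝ, 0 < θ → 0 < θ' → θ + θ' = 1 →
      f (fun k => θ * z k + θ' * z' k) ≤ f z ^ θ * f z' ^ θ'

lemma hoelder2 {a b c d θ θ' : ℝ} (ha : 0 ≤ a) (hb : 0 ≤ b) (hc : 0 ≤ c) (hd : 0 ≤ d)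
    (hθ : 0 < θ) (hθ' : 0 < θ') (hs : θ + θ' = 1) :
    a ^ θ * b ^ θ' + c ^ θ * d ^ θ' ≤ (a + c) ^ θ * (b + d) ^ θ' := by
  by_cases hac : a + c = 0
  · have ha0 : a = 0 := le_antisymm (by linarith) ha
    have hc0 : c = 0 := le_antisymm (by linarith) hc
    rw [ha0, hc0, Real.zero_rpow (ne_of_gt hθ)]
    simp
    positivity
  · by_cases hbd : b + d = 0
    · have hb0 : b = 0 := le_antisymm (by linarith) hb
      have hd0 : d = 0 := le_antisymm (by linarith) hd
      rw [hb0, hd0, Real.zero_rpow (ne_of_gt hθ')]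
      simp
      positivity
    · have hacpos : 0 < a + c := lt_of_le_of_ne (by linarith) (Ne.symm hac)
      have hbdpos : 0 < b + d := lt_of_le_of_ne (by linarith) (Ne.symm hbd)
      have e1 : (a / (a + c)) ^ θ * (a + c) ^ θ = a ^ θ := by
        rw [← Real.mul_rpow (div_nonneg ha hacpos.le) hacpos.le,
          div_mul_cancel₀ a (ne_of_gt hacpos)]
      have e2 : (b / (b + d)) ^ θ' * (b + d) ^ θ' = b ^ θ' := by
        rw [← Real.mul_rpow (div_nonneg hb hbdpos.le) hbdpos.le,
          div_mul_cancel₀ b (ne_of_gt hbdpos)]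
      have e3 : (c / (a + c)) ^ θ * (a + c) ^ θ = c ^ θ := by
        rw [← Real.mul_rpow (div_nonneg hc hacpos.le) hacpos.le,
          div_mul_cancel₀ c (ne_of_gt hacpos)]
      have e4 : (d / (b + d)) ^ θ' * (b + d) ^ θ' = d ^ θ' := by
        rw [← Real.mul_rpow (div_nonneg hd hbdpos.le) hbdpos.le,
          div_mul_cancel₀ d (ne_of_gt hbdpos)]
      have hG1 : (a / (a + c)) ^ θ * (b / (b + d)) ^ θ'
          ≤ θ * (a / (a + c)) + θ' * (b / (b + d)) :=
        Real.geom_mean_le_arith_mean2_weighted hθ.le hθ'.le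
          (div_nonneg ha hacpos.le) (div_nonneg hb hbdpos.le) hs
      have hG2 : (c / (a + c)) ^ θ * (d / (b + d)) ^ θ'
          ≤ θ * (c / (a + c)) + θ' * (d / (b + d)) :=
        Real.geom_mean_le_arith_mean2_weighted hθ.le hθ'.le
          (div_nonneg hc hacpos.le) (div_nonneg hd hbdpos.le) hs
      have hA : a / (a + c) + c / (a + c) = 1 := by field_simp
      have hB : b / (b + d) + d / (b + d) = 1 := by field_simp
      have hsum : θ * (a / (a + c)) + θ' * (b / (b + d))
          + (θ * (c / (a + c)) + θ' * (d / (b + d))) = 1 := by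
        linear_combination θ * hA + θ' * hB + hs
      have hRpos : (0:ℝ) ≤ (a + c) ^ θ * (b + d) ^ θ' := by positivity
      calc a ^ θ * b ^ θ' + c ^ θ * d ^ θ'
          = ((a / (a + c)) ^ θ * (b / (b + d)) ^ θ'
            + (c / (a + c)) ^ θ * (d / (b + d)) ^ θ') * ((a + c) ^ θ * (b + d) ^ θ') := by
            rw [← e1, ← e2, ← e3, ← e4]; ring
        _ ≤ (θ * (a / (a + c)) + θ' * (b / (b + d))
            + (θ * (c / (a + c)) + θ' * (d / (b + d)))) * ((a + c) ^ θ * (b + d) ^ θ') := by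
            apply mul_le_mul_of_nonneg_right _ hRpos
            linarith
        _ = (a + c) ^ θ * (b + d) ^ θ' := by rw [hsum, one_mul]

lemma LC.const {N : ℕ} {c : ℝ} (hc : 0 ≤ c) : LC (N := N) (fun _ => c) := by
  refine ⟨fun _ _ => hc, fun z z' _ _ θ θ' hθ hθ' hs => ?_⟩
  rcases hc.lt_or_eq with h | h
  · rw [← Real.rpow_add h, hs, Real.rpow_one]
  · rw [← h, Real.zero_rpow (ne_of_gt hθ), zero_mul]

lemma LC.mul {N : ℕ} {f g : (Fin N → ℝ) → ℝ} (hf : LC f) (hg : LC g) :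
    LC (fun z => f z * g z) := by
  refine ⟨fun z hz => mul_nonneg (hf.1 z hz) (hg.1 z hz),
    fun z z' hz hz' θ θ' hθ hθ' hs => ?_⟩
  have hzθ : ∀ k, 0 ≤ θ * z k + θ' * z' k := fun k => by
    have := hz k; have := hz' k; positivity
  show f (fun k => θ * z k + θ' * z' k) * g (fun k => θ * z k + θ' * z' k)
      ≤ (f z * g z) ^ θ * (f z' * g z') ^ θ'
  calc f (fun k => θ * z k + θ' * z' k) * g (fun k => θ * z k + θ' * z' k)
      ≤ (f z ^ θ * f z' ^ θ') * (g z ^ θ * g z' ^ θ') := by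
        apply mul_le_mul (hf.2 z z' hz hz' θ θ' hθ hθ' hs) (hg.2 z z' hz hz' θ θ' hθ hθ' hs)
          (hg.1 _ hzθ)
        exact mul_nonneg (Real.rpow_nonneg (hf.1 z hz) θ) (Real.rpow_nonneg (hf.1 z' hz') θ')
    _ = (f z * g z) ^ θ * (f z' * g z') ^ θ' := by
        rw [Real.mul_rpow (hf.1 z hz) (hg.1 z hz), Real.mul_rpow (hf.1 z' hz') (hg.1 z' hz')]
        ring

lemma LC.add {N : ℕ} {f g : (Fin N → ℝ) → ℝ} (hf : LC f) (hg : LC g) :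
    LC (fun z => f z + g z) := by
  refine ⟨fun z hz => add_nonneg (hf.1 z hz) (hg.1 z hz),
    fun z z' hz hz' θ θ' hθ hθ' hs => ?_⟩
  show f (fun k => θ * z k + θ' * z' k) + g (fun k => θ * z k + θ' * z' k)
      ≤ (f z + g z) ^ θ * (f z' + g z') ^ θ'
  calc f (fun k => θ * z k + θ' * z' k) + g (fun k => θ * z k + θ' * z' k)
      ≤ (f z ^ θ * f z' ^ θ') + (g z ^ θ * g z' ^ θ') :=
        add_le_add (hf.2 z z' hz hz' θ θ' hθ hθ' hs) (hg.2 z z' hz hz' θ θ' hθ hθ' hs)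
    _ ≤ (f z + g z) ^ θ * (f z' + g z') ^ θ' :=
        hoelder2 (hf.1 z hz) (hf.1 z' hz') (hg.1 z hz) (hg.1 z' hz') hθ hθ' hs

lemma LC.sum {N : ℕ} {ι : Type*} (s : Finset ι) (f : ι → (Fin N → ℝ) → ℝ)
    (h : ∀ i ∈ s, LC (f i)) : LC (fun z => ∑ i ∈ s, f i z) := by
  classical
  induction s using Finset.induction_on with
  | empty => simpa using LC.const (le_refl (0:ℝ))
  | insert a s' hnotmem ih =>
      have he : (fun z => ∑ i ∈ insert a s', f i z)
          = fun z => f a z + ∑ i ∈ s', f i z :=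
        funext fun z => Finset.sum_insert hnotmem
      rw [he]
      exact (h a (Finset.mem_insert_self a s')).add
        (ih fun i hi => h i (Finset.mem_insert_of_mem hi))

lemma LC.inv_affine {N : ℕ} (k : Fin N) {a : ℝ} (ha : 0 < a) :
    LC (fun z : Fin N → ℝ => (z k + a)⁻¹) := by
  constructor
  · intro z hz
    have : 0 < z k + a := by have := hz k; linarith
    positivity
  · intro z z' hz hz' θ θ' hθ hθ' hs
    have hp : 0 < z k + a := by have := hz k; linarith
    have hq : 0 < z' k + a := by have := hz' k; linarith
    have heq : θ * z k + θ' * z' k + a = θ * (z k + a) + θ' * (z' k + a) := by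
      linear_combination a * hs.symm
    show (θ * z k + θ' * z' k + a)⁻¹ ≤ (z k + a)⁻¹ ^ θ * (z' k + a)⁻¹ ^ θ'
    rw [heq]
    have hAM : (z k + a) ^ θ * (z' k + a) ^ θ' ≤ θ * (z k + a) + θ' * (z' k + a) :=
      Real.geom_mean_le_arith_mean2_weighted hθ.le hθ'.le hp.le hq.le hs
    have hposL : 0 < (z k + a) ^ θ * (z' k + a) ^ θ' := by positivity
    have h1 : (θ * (z k + a) + θ' * (z' k + a))⁻¹ ≤ ((z k + a) ^ θ * (z' k + a) ^ θ')⁻¹ := by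
      gcongr
    refine le_trans h1 (le_of_eq ?_)
    rw [mul_inv, ← Real.inv_rpow hp.le, ← Real.inv_rpow hq.le]

lemma LC.to_convex {N : ℕ} {f : (Fin N → ℝ) → ℝ} (hf : LC f)
    (z z' : Fin N → ℝ) (hz : ∀ k, 0 ≤ z k) (hz' : ∀ k, 0 ≤ z' k)
    {θ θ' : ℝ} (hθ : 0 < θ) (hθ' : 0 < θ') (hs : θ + θ' = 1) :
    f (fun k => θ * z k + θ' * z' k) ≤ θ * f z + θ' * f z' :=
  le_trans (hf.2 z z' hz hz' θ θ' hθ hθ' hs)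
    (Real.geom_mean_le_arith_mean2_weighted hθ.le hθ'.le (hf.1 z hz) (hf.1 z' hz') hs)

lemma diag_mulVec (f v : Fin N → ℝ) (k : Fin N) :
    (Matrix.diagonal f *ᵥ v) k = f k * v k := by
  rw [mulVec_apply', Finset.sum_eq_single k]
  · rw [Matrix.diagonal_apply_eq]
  · intro b _ hbk
    rw [Matrix.diagonal_apply_ne f (Ne.symm hbk), zero_mul]
  · intro h; exact absurd (Finset.mem_univ k) h

lemma sum_offDiag_mul (C : Matrix (Fin N) (Fin N) ℝ) (w : Fin N → ℝ) (k : Fin N) :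
    ∑ j, offDiag C k j * w j = (∑ j, C k j * w j) - C k k * w k := by
  have h : ∀ j, offDiag C k j * w j = C k j * w j - (if k = j then C k j * w j else 0) := by
    intro j
    rw [offDiag_apply]
    split_ifs with hkj
    · subst hkj; ring
    · ring
  rw [Finset.sum_congr rfl (fun j _ => h j), Finset.sum_sub_distrib, Finset.sum_ite_eq]
  simp

lemma gap_pos (hN : 2 ≤ N) {C : Matrix (Fin N) (Fin N) ℝ} (hC : ∀ i j, 0 ≤ C i j)
    (hirr : MatIrred C) {σ : ℝ} (hσ : specRad C ≤ σ) : ∀ k, 0 < σ - C k k := by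
  obtain ⟨w, hwpos, hwsub⟩ := exists_perron hN hC hirr
  have hCw : ∀ k, (C *ᵥ w) k ≤ σ * w k := fun k =>
    le_trans (hwsub k) (mul_le_mul_of_nonneg_right hσ (hwpos k).le)
  intro k
  obtain ⟨m, hm1, hmpos⟩ := offDiag_irred hN hC hirr k k
  obtain ⟨g, hg0, _, hgw⟩ := pow_to_walk (offDiag_nonneg hC) m k k hmpos
  have hstep : 0 < offDiag C k (g 1) := by
    have := hgw 0 (by omega)
    rwa [hg0] at this
  set j : Fin N := g 1 with hj
  have hkj : k ≠ j := by
    intro hcon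
    rw [offDiag_apply, ← hcon, if_pos rfl] at hstep
    exact lt_irrefl 0 hstep
  have hCkj : 0 < C k j := by
    rwa [offDiag_apply, if_neg hkj] at hstep
  have hpair : C k k * w k + C k j * w j ≤ ∑ l, C k l * w l := by
    have hsub : ∑ l ∈ ({k, j} : Finset (Fin N)), C k l * w l ≤ ∑ l, C k l * w l :=
      Finset.sum_le_sum_of_subset_of_nonneg (Finset.subset_univ _)
        (fun l _ _ => mul_nonneg (hC k l) (hwpos l).le)
    rwa [Finset.sum_pair hkj] at hsub
  have hCwk := hCw k
  rw [mulVec_apply'] at hCwk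
  nlinarith [mul_pos hCkj (hwpos j), hwpos k, mul_pos (hwpos k) (hwpos k)]

lemma master (hN : 2 ≤ N) {C : Matrix (Fin N) (Fin N) ℝ} (hC : ∀ i j, 0 ≤ C i j)
    (hirr : MatIrred C) {σ : ℝ} (hσ : specRad C ≤ σ)
    {z : Fin N → ℝ} (hz : ∀ k, 0 ≤ z k) (hz0 : z ≠ 0) :
    IsUnit (Matrix.diagonal z + (σ • (1 : Matrix (Fin N) (Fin N) ℝ) - C)) ∧
    (∀ i j, 0 ≤ (Matrix.diagonal z + (σ • (1 : Matrix (Fin N) (Fin N) ℝ) - C))⁻¹ i j) ∧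
    (∀ i j, Summable (fun n =>
      ((Matrix.diagonal (fun k => (z k + (σ - C k k))⁻¹) * offDiag C) ^ n
        * Matrix.diagonal (fun k => (z k + (σ - C k k))⁻¹)) i j)) ∧
    (∀ i j, (Matrix.diagonal z + (σ • (1 : Matrix (Fin N) (Fin N) ℝ) - C))⁻¹ i j
      = ∑' n, ((Matrix.diagonal (fun k => (z k + (σ - C k k))⁻¹) * offDiag C) ^ n
        * Matrix.diagonal (fun k => (z k + (σ - C k k))⁻¹)) i j) := by
  classical
  obtain ⟨w, hwpos, hwsub⟩ := exists_perron hN hC hirr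
  have hCw : ∀ k, (C *ᵥ w) k ≤ σ * w k := fun k =>
    le_trans (hwsub k) (mul_le_mul_of_nonneg_right hσ (hwpos k).le)
  have hgap : ∀ k, 0 < σ - C k k := gap_pos hN hC hirr hσ
  obtain ⟨k₀, hk₀ne⟩ := Function.ne_iff.mp hz0
  have hk₀ : 0 < z k₀ := lt_of_le_of_ne (hz k₀) (Ne.symm (by simpa using hk₀ne))
  set Dinv : Matrix (Fin N) (Fin N) ℝ :=
    Matrix.diagonal (fun k => (z k + (σ - C k k))⁻¹) with hDinv
  set G : Matrix (Fin N) (Fin N) ℝ := Dinv * offDiag C with hGdef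
  have hdpos : ∀ k, 0 < z k + (σ - C k k) := fun k => by
    have := hz k; have := hgap k; linarith
  have hCoffnn := offDiag_nonneg hC
  have hGapp : ∀ i j, G i j = (z i + (σ - C i i))⁻¹ * offDiag C i j := by
    intro i j
    rw [hGdef, hDinv, Matrix.diagonal_mul]
  have hG0 : ∀ i j, 0 ≤ G i j := fun i j => by
    rw [hGapp]
    exact mul_nonneg (inv_nonneg.mpr (hdpos i).le) (hCoffnn i j)
  have hNE : Nonempty (Fin N) := ⟨k₀⟩
  have hGirr : ∀ i j, ∃ k, 1 ≤ k ∧ 0 < (G ^ k) i j := by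
    intro i j
    obtain ⟨m, hm1, hmpos⟩ := offDiag_irred hN hC hirr i j
    set ε : ℝ := Finset.univ.inf' Finset.univ_nonempty
      (fun k => (z k + (σ - C k k))⁻¹) with hε
    have hεpos : 0 < ε := by
      rw [hε, Finset.lt_inf'_iff]
      exact fun k _ => inv_pos.mpr (hdpos k)
    have hle : ∀ a b, (ε • offDiag C) a b ≤ G a b := by
      intro a b
      rw [Matrix.smul_apply, smul_eq_mul, hGapp]
      exact mul_le_mul_of_nonneg_right (Finset.inf'_le _ (Finset.mem_univ a)) (hCoffnn a b)
    have hsm : ∀ a b, 0 ≤ (ε • offDiag C) a b := fun a b => by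
      rw [Matrix.smul_apply, smul_eq_mul]
      exact mul_nonneg hεpos.le (hCoffnn a b)
    have h1 := matpow_le hsm hle m i j
    have h2 : ((ε • offDiag C) ^ m) i j = ε ^ m * (offDiag C ^ m) i j := by
      rw [smul_pow, Matrix.smul_apply, smul_eq_mul]
    refine ⟨m, hm1, lt_of_lt_of_le (mul_pos (pow_pos hεpos m) hmpos) ?_⟩
    rw [← h2]
    exact h1
  have hGmv : ∀ k, (G *ᵥ w) k
      = (z k + (σ - C k k))⁻¹ * ((∑ l, C k l * w l) - C k k * w k) := by
    intro k
    rw [hGdef, ← Matrix.mulVec_mulVec, hDinv, diag_mulVec, ← sum_offDiag_mul]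
    rw [mulVec_apply']
  have hGsub : ∀ k, (G *ᵥ w) k ≤ w k := by
    intro k
    rw [hGmv]
    have h3 := hCw k
    rw [mulVec_apply'] at h3
    have h4 : 0 ≤ z k * w k := mul_nonneg (hz k) (hwpos k).le
    have h2 : (∑ l, C k l * w l) - C k k * w k ≤ (z k + (σ - C k k)) * w k := by
      have h5 : (z k + (σ - C k k)) * w k = z k * w k + σ * w k - C k k * w k := by ring
      linarith
    calc (z k + (σ - C k k))⁻¹ * ((∑ l, C k l * w l) - C k k * w k)
        ≤ (z k + (σ - C k k))⁻¹ * ((z k + (σ - C k k)) * w k) :=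
          mul_le_mul_of_nonneg_left h2 (inv_nonneg.mpr (hdpos k).le)
      _ = w k := by rw [← mul_assoc, inv_mul_cancel₀ (ne_of_gt (hdpos k)), one_mul]
  have hGstrict : (G *ᵥ w) k₀ < w k₀ := by
    rw [hGmv]
    have h3 := hCw k₀
    rw [mulVec_apply'] at h3
    have h4 : 0 < z k₀ * w k₀ := mul_pos hk₀ (hwpos k₀)
    have h2 : (∑ l, C k₀ l * w l) - C k₀ k₀ * w k₀ < (z k₀ + (σ - C k₀ k₀)) * w k₀ := by
      have h5 : (z k₀ + (σ - C k₀ k₀)) * w k₀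
          = z k₀ * w k₀ + σ * w k₀ - C k₀ k₀ * w k₀ := by ring
      linarith
    calc (z k₀ + (σ - C k₀ k₀))⁻¹ * ((∑ l, C k₀ l * w l) - C k₀ k₀ * w k₀)
        < (z k₀ + (σ - C k₀ k₀))⁻¹ * ((z k₀ + (σ - C k₀ k₀)) * w k₀) :=
          mul_lt_mul_of_pos_left h2 (inv_pos.mpr (hdpos k₀))
      _ = w k₀ := by rw [← mul_assoc, inv_mul_cancel₀ (ne_of_gt (hdpos k₀)), one_mul]
  have hSum : ∀ i j, Summable fun n => (G ^ n) i j :=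
    summable_pow_entries hG0 hGirr hwpos hGsub k₀ hGstrict
  set W : Matrix (Fin N) (Fin N) ℝ := Matrix.of (fun i j => ∑' n, (G ^ n) i j) with hW
  have hWapp : ∀ i j, W i j = ∑' n, (G ^ n) i j := fun i j => rfl
  have hWnn : ∀ i j, 0 ≤ W i j := fun i j => tsum_nonneg fun n => matpow_nonneg hG0 n i j
  have hGW : (1 - G) * W = 1 := by
    ext i j
    rw [Matrix.sub_mul, Matrix.one_mul, Matrix.sub_apply]
    have h1 : (G * W) i j = ∑' n, (G ^ (n + 1)) i j := by
      rw [Matrix.mul_apply]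
      simp only [hWapp]
      rw [Finset.sum_congr rfl fun k _ =>
        (tsum_mul_left (a := G i k) (f := fun n => (G ^ n) k j)).symm]
      rw [← Summable.tsum_finsetSum (fun k _ => (hSum k j).mul_left (G i k))]
      refine tsum_congr fun n => ?_
      rw [pow_succ' G n, Matrix.mul_apply]
    rw [h1, hWapp, Summable.tsum_eq_zero_add (hSum i j), pow_zero]
    ring
  have hWG : W * (1 - G) = 1 := by
    ext i j
    rw [Matrix.mul_sub, Matrix.mul_one, Matrix.sub_apply]
    have h1 : (W * G) i j = ∑' n, (G ^ (n + 1)) i j := by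
      rw [Matrix.mul_apply]
      simp only [hWapp]
      rw [Finset.sum_congr rfl fun k _ =>
        (tsum_mul_right (a := G k j) (f := fun n => (G ^ n) i k)).symm]
      rw [← Summable.tsum_finsetSum (fun k _ => (hSum i k).mul_right (G k j))]
      refine tsum_congr fun n => ?_
      rw [pow_succ G n, Matrix.mul_apply]
    rw [h1, hWapp, Summable.tsum_eq_zero_add (hSum i j), pow_zero]
    ring
  set Dd : Matrix (Fin N) (Fin N) ℝ :=
    Matrix.diagonal (fun k => z k + (σ - C k k)) with hDd
  have hDdDinv : Dd * Dinv = 1 := by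
    rw [hDd, hDinv, Matrix.diagonal_mul_diagonal]
    rw [show (fun k => (z k + (σ - C k k)) * (z k + (σ - C k k))⁻¹) = fun _ => (1:ℝ) from
      funext fun k => mul_inv_cancel₀ (ne_of_gt (hdpos k))]
    exact Matrix.diagonal_one
  have hfact : Matrix.diagonal z + (σ • (1 : Matrix (Fin N) (Fin N) ℝ) - C)
      = Dd * (1 - G) := by
    have h1 : Dd * (1 - G) = Dd - offDiag C := by
      rw [Matrix.mul_sub, Matrix.mul_one, hGdef, ← Matrix.mul_assoc, hDdDinv, Matrix.one_mul]
    rw [h1]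
    ext i j
    by_cases h : i = j
    · subst h
      rw [Matrix.add_apply, Matrix.sub_apply, Matrix.sub_apply, Matrix.smul_apply,
        Matrix.one_apply_eq, Matrix.diagonal_apply_eq, hDd, Matrix.diagonal_apply_eq,
        offDiag_apply, if_pos rfl, smul_eq_mul]
      ring
    · rw [Matrix.add_apply, Matrix.sub_apply, Matrix.sub_apply, Matrix.smul_apply,
        Matrix.one_apply_ne h, Matrix.diagonal_apply_ne _ h, hDd,
        Matrix.diagonal_apply_ne _ h, offDiag_apply, if_neg h, smul_eq_mul]
      ring
  have hUnit1G : IsUnit (1 - G) := (Matrix.isUnit_iff_isUnit_det _).mpr (Matrix.isUnit_det_of_right_inverse hGW)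
  have hUnitDd : IsUnit Dd := (Matrix.isUnit_iff_isUnit_det _).mpr (Matrix.isUnit_det_of_right_inverse hDdDinv)
  have hUnitM : IsUnit (Matrix.diagonal z + (σ • (1 : Matrix (Fin N) (Fin N) ℝ) - C)) := by
    rw [hfact]
    exact hUnitDd.mul hUnit1G
  have hright : (Matrix.diagonal z + (σ • (1 : Matrix (Fin N) (Fin N) ℝ) - C))
      * (W * Dinv) = 1 := by
    rw [hfact, Matrix.mul_assoc, ← Matrix.mul_assoc (1 - G) W Dinv, hGW, Matrix.one_mul,
      hDdDinv]
  have hMinv : (Matrix.diagonal z + (σ • (1 : Matrix (Fin N) (Fin N) ℝ) - C))⁻¹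
      = W * Dinv := Matrix.inv_eq_right_inv hright
  have hTapp : ∀ n i j, ((G ^ n) * Dinv) i j = (G ^ n) i j * (z j + (σ - C j j))⁻¹ :=
    fun n i j => by rw [hDinv, Matrix.mul_diagonal]
  refine ⟨hUnitM, ?_, ?_, ?_⟩
  · intro i j
    rw [hMinv, hDinv, Matrix.mul_diagonal]
    exact mul_nonneg (hWnn i j) (inv_nonneg.mpr (hdpos j).le)
  · intro i j
    refine ((hSum i j).mul_right ((z j + (σ - C j j))⁻¹)).congr fun n => (hTapp n i j).symm
  · intro i j
    rw [hMinv, hDinv, Matrix.mul_diagonal, hWapp, ← tsum_mul_right]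
    exact tsum_congr fun n => by rw [← hDinv, hTapp n i j]

def MatLC {N : ℕ} (F : (Fin N → ℝ) → Matrix (Fin N) (Fin N) ℝ) : Prop :=
  ∀ i j, LC (fun z => F z i j)

lemma MatLC.const' {A : Matrix (Fin N) (Fin N) ℝ} (hA : ∀ i j, 0 ≤ A i j) :
    MatLC (fun _ => A) := fun i j => LC.const (hA i j)

lemma MatLC.mul {F G : (Fin N → ℝ) → Matrix (Fin N) (Fin N) ℝ}
    (hF : MatLC F) (hG : MatLC G) : MatLC (fun z => F z * G z) := by
  intro i j
  have he : (fun z => (F z * G z) i j) = fun z => ∑ k, F z i k * G z k j :=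
    funext fun z => Matrix.mul_apply
  rw [he]
  exact LC.sum Finset.univ _ (fun k _ => (hF i k).mul (hG k j))

lemma MatLC.dinv {a : Fin N → ℝ} (ha : ∀ k, 0 < a k) :
    MatLC (fun z : Fin N → ℝ => Matrix.diagonal (fun k => (z k + a k)⁻¹)) := by
  intro i j
  by_cases h : i = j
  · subst h
    have he : (fun z : Fin N → ℝ => Matrix.diagonal (fun k => (z k + a k)⁻¹) i i)
        = fun z => (z i + a i)⁻¹ := funext fun z => Matrix.diagonal_apply_eq _ i
    rw [he]
    exact LC.inv_affine i (ha i)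
  · have he : (fun z : Fin N → ℝ => Matrix.diagonal (fun k => (z k + a k)⁻¹) i j)
        = fun _ => 0 := funext fun z => Matrix.diagonal_apply_ne _ h
    rw [he]
    exact LC.const (le_refl 0)

lemma terms_LC {C : Matrix (Fin N) (Fin N) ℝ} (hC : ∀ i j, 0 ≤ C i j)
    {a : Fin N → ℝ} (ha : ∀ k, 0 < a k) (n : ℕ) :
    MatLC (fun z : Fin N → ℝ =>
      (Matrix.diagonal (fun k => (z k + a k)⁻¹) * offDiag C) ^ n
        * Matrix.diagonal (fun k => (z k + a k)⁻¹)) := by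
  induction n with
  | zero =>
      have he : (fun z : Fin N → ℝ =>
          (Matrix.diagonal (fun k => (z k + a k)⁻¹) * offDiag C) ^ 0
            * Matrix.diagonal (fun k => (z k + a k)⁻¹))
          = fun z : Fin N → ℝ => Matrix.diagonal (fun k => (z k + a k)⁻¹) :=
        funext fun z => by rw [pow_zero, Matrix.one_mul]
      rw [he]
      exact MatLC.dinv ha
  | succ n ih =>
      have he : (fun z : Fin N → ℝ =>
          (Matrix.diagonal (fun k => (z k + a k)⁻¹) * offDiag C) ^ (n + 1)
            * Matrix.diagonal (fun k => (z k + a k)⁻¹))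
          = fun z : Fin N → ℝ => Matrix.diagonal (fun k => (z k + a k)⁻¹) * (offDiag C *
              ((Matrix.diagonal (fun k => (z k + a k)⁻¹) * offDiag C) ^ n
                * Matrix.diagonal (fun k => (z k + a k)⁻¹))) :=
        funext fun z => by rw [pow_succ' _ n, Matrix.mul_assoc, Matrix.mul_assoc]
      rw [he]
      exact (MatLC.dinv ha).mul ((MatLC.const' (offDiag_nonneg hC)).mul ih)

end Statement5Aux

theorem statement5 {N : ℕ} (hN : 2 ≤ N)
    (C : Matrix (Fin N) (Fin N) ℝ) (hCnn : ∀ i j, 0 ≤ C i j) (hCirr : MatIrred C)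
    (σ : ℝ) (hσ : specRad C ≤ σ)
    (A : Matrix (Fin N) (Fin N) ℝ) (hA : A = σ • (1 : Matrix (Fin N) (Fin N) ℝ) - C) :
    (∀ z : Fin N → ℝ, (∀ i, 0 ≤ z i) → z ≠ 0 →
      IsUnit (Matrix.diagonal z + A) ∧
      ∀ i j, 0 ≤ (Matrix.diagonal z + A)⁻¹ i j) ∧
    (∀ i j : Fin N, ∀ z z' : Fin N → ℝ,
      (∀ k, 0 ≤ z k) → z ≠ 0 → (∀ k, 0 ≤ z' k) → z' ≠ 0 →
      (∀ θ : ℝ, 0 ≤ θ → θ ≤ 1 →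
        (Matrix.diagonal (fun k => θ * z k + (1 - θ) * z' k) + A)⁻¹ i j ≤
          θ * (Matrix.diagonal z + A)⁻¹ i j + (1 - θ) * (Matrix.diagonal z' + A)⁻¹ i j) ∧
      (z ≤ z' → (Matrix.diagonal z' + A)⁻¹ i j ≤ (Matrix.diagonal z + A)⁻¹ i j)) := by
  subst hA
  have hgap : ∀ k, 0 < σ - C k k := Statement5Aux.gap_pos hN hCnn hCirr hσ
  constructor
  · intro z hz hz0
    obtain ⟨hu, hnn, _, _⟩ := Statement5Aux.master hN hCnn hCirr hσ hz hz0
    exact ⟨hu, hnn⟩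
  · intro i j z z' hz hz0 hz' hz'0
    obtain ⟨hu, hnn, hsumz, heqz⟩ := Statement5Aux.master hN hCnn hCirr hσ hz hz0
    obtain ⟨hu', hnn', hsumz', heqz'⟩ := Statement5Aux.master hN hCnn hCirr hσ hz' hz'0
    constructor
    · intro θ hθ0 hθ1
      rcases eq_or_lt_of_le hθ0 with h0 | h0
      · have hzz : (fun k => θ * z k + (1 - θ) * z' k) = z' :=
          funext fun k => by rw [← h0]; ring
        rw [hzz, ← h0]
        norm_num
      rcases eq_or_lt_of_le hθ1 with h1 | h1
      · have hzz : (fun k => θ * z k + (1 - θ) * z' k) = z :=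
          funext fun k => by rw [h1]; ring
        rw [hzz, h1]
        norm_num
      · have hθ'pos : 0 < 1 - θ := by linarith
        have hsum1 : θ + (1 - θ) = 1 := by ring
        have hzθnn : ∀ k, 0 ≤ θ * z k + (1 - θ) * z' k := fun k => by
          have := hz k; have := hz' k
          nlinarith
        have hzθ0 : (fun k => θ * z k + (1 - θ) * z' k) ≠ 0 := by
          obtain ⟨k₁, hk₁⟩ := Function.ne_iff.mp hz0
          have hk₁pos : 0 < z k₁ := lt_of_le_of_ne (hz k₁) (Ne.symm (by simpa using hk₁))
          intro hcon
          have h2 := congrFun hcon k₁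
          have h3 : 0 < θ * z k₁ + (1 - θ) * z' k₁ := by
            have := hz' k₁
            nlinarith
          simp only [Pi.zero_apply] at h2
          linarith [h3, le_of_eq h2]
        obtain ⟨huθ, hnnθ, hsumθ, heqθ⟩ :=
          Statement5Aux.master hN hCnn hCirr hσ hzθnn hzθ0
        rw [heqθ i j, heqz i j, heqz' i j]
        have hterm : ∀ n,
            ((Matrix.diagonal (fun k => ((θ * z k + (1 - θ) * z' k) + (σ - C k k))⁻¹)
                * Statement5Aux.offDiag C) ^ n
              * Matrix.diagonal (fun k => ((θ * z k + (1 - θ) * z' k) + (σ - C k k))⁻¹)) i j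
            ≤ θ * (((Matrix.diagonal (fun k => (z k + (σ - C k k))⁻¹)
                * Statement5Aux.offDiag C) ^ n
              * Matrix.diagonal (fun k => (z k + (σ - C k k))⁻¹)) i j)
            + (1 - θ) * (((Matrix.diagonal (fun k => (z' k + (σ - C k k))⁻¹)
                * Statement5Aux.offDiag C) ^ n
              * Matrix.diagonal (fun k => (z' k + (σ - C k k))⁻¹)) i j) := by
          intro n
          exact (Statement5Aux.terms_LC hCnn hgap n i j).to_convex z z' hz hz' h0 hθ'pos hsum1
        refine le_trans (Summable.tsum_le_tsum hterm (hsumθ i j)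
          (((hsumz i j).mul_left θ).add (((hsumz' i j).mul_left (1 - θ))))) (le_of_eq ?_)
        rw [Summable.tsum_add ((hsumz i j).mul_left θ) ((hsumz' i j).mul_left (1 - θ)),
          tsum_mul_left, tsum_mul_left]
    · intro hle
      have hdet : IsUnit (Matrix.diagonal z + (σ • (1 : Matrix (Fin N) (Fin N) ℝ) - C)).det :=
        (Matrix.isUnit_iff_isUnit_det _).mp hu
      have hdet' : IsUnit (Matrix.diagonal z' + (σ • (1 : Matrix (Fin N) (Fin N) ℝ) - C)).det :=
        (Matrix.isUnit_iff_isUnit_det _).mp hu'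
      set Mz := Matrix.diagonal z + (σ • (1 : Matrix (Fin N) (Fin N) ℝ) - C) with hMz
      set Mz' := Matrix.diagonal z' + (σ • (1 : Matrix (Fin N) (Fin N) ℝ) - C) with hMz'
      have hdiff : Mz' - Mz = Matrix.diagonal (fun k => z' k - z k) := by
        rw [hMz, hMz', add_sub_add_right_eq_sub, Matrix.diagonal_sub]
      have hkey : Mz⁻¹ * (Mz' - Mz) * Mz'⁻¹ = Mz⁻¹ - Mz'⁻¹ := by
        rw [Matrix.mul_sub, Matrix.sub_mul, Matrix.mul_assoc Mz⁻¹ Mz' Mz'⁻¹,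
          Matrix.mul_nonsing_inv _ hdet', Matrix.mul_one, Matrix.nonsing_inv_mul _ hdet,
          Matrix.one_mul]
      have hnneg : 0 ≤ (Mz⁻¹ * (Mz' - Mz) * Mz'⁻¹) i j := by
        rw [hdiff, Matrix.mul_apply]
        refine Finset.sum_nonneg fun l _ => mul_nonneg ?_ (hnn' l j)
        rw [Matrix.mul_diagonal]
        exact mul_nonneg (hnn i l) (sub_nonneg.mpr (hle l))
      rw [hkey, Matrix.sub_apply] at hnneg
      linarith
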